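/- Let 0 < μ < 1/m_φ, assume F attains a finite minimal value, and let z̄ be a local minimizer of F_μ: there is r > 0 with F_μ(z̄) ≤ F_μ(z) for all z with ‖z − z̄‖ ≤ r. Suppose all subgradients of g are uniformly bounded, i.e., every ξ ∈ ∂g(x) for any x ∈ ℝⁿ satisfies ‖ξ‖ ≤ M_{∂g} for some M_{∂g} ≥ 0, and suppose r > 2μ M_{∂g}. Then F(x_{μφ}(z̄)) ≤ F(x) for every x ∈ ℝⁿ with ‖x − x_{μφ}(z̄)‖ ≤ r − 2μ M_{∂g}. -/

import Mathlib

open scoped RealInnerProductSpace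

noncomputable section

/-- `ℝⁿ` with the Euclidean norm. -/
abbrev En (n : ℕ) := EuclideanSpace ℝ (Fin n)

/-- `φ` is proper: finite somewhere and never `⊥`. -/
def ProperE {n : ℕ} (φ : En n → EReal) : Prop :=
  (∃ x, φ x ≠ ⊤) ∧ ∀ x, φ x ≠ ⊥

/-- `φ` is `m`-weakly convex: `x ↦ φ x + (m/2)‖x‖²` is convex. -/
def WeaklyConvexOn {n : ℕ} (φ : En n → EReal) (m : ℝ) : Prop :=
  ∀ x y : En n, ∀ a b : ℝ, 0 ≤ a → 0 ≤ b → a + b = 1 →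
    φ (a • x + b • y) + (((m / 2) * ‖a • x + b • y‖ ^ 2 : ℝ) : EReal) ≤
      (a : EReal) * (φ x + (((m / 2) * ‖x‖ ^ 2 : ℝ) : EReal)) +
        (b : EReal) * (φ y + (((m / 2) * ‖y‖ ^ 2 : ℝ) : EReal))

/-- `Mφ` is the Moreau envelope of `φ` with parameter `μ` and `xφ` the associated
(unique) proximal mapping. -/
def IsMoreau {n : ℕ} (φ : En n → EReal) (μ : ℝ) (Mφ : En n → ℝ) (xφ : En n → En n) : Prop :=
  ∀ z : En n,
    (Mφ z : EReal) = φ (xφ z) + ((‖xφ z - z‖ ^ 2 / (2 * μ) : ℝ) : EReal) ∧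
    (∀ x, (Mφ z : EReal) ≤ φ x + ((‖x - z‖ ^ 2 / (2 * μ) : ℝ) : EReal)) ∧
    (∀ x, φ x + ((‖x - z‖ ^ 2 / (2 * μ) : ℝ) : EReal) = (Mφ z : EReal) → x = xφ z)

/-- Real-valued version, for the convex function `g`. -/
def IsMoreauR {n : ℕ} (g : En n → ℝ) (μ : ℝ) (Mg : En n → ℝ) (xg : En n → En n) : Prop :=
  ∀ z : En n,
    Mg z = g (xg z) + ‖xg z - z‖ ^ 2 / (2 * μ) ∧
    (∀ x, Mg z ≤ g x + ‖x - z‖ ^ 2 / (2 * μ)) ∧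
    (∀ x, g x + ‖x - z‖ ^ 2 / (2 * μ) = Mg z → x = xg z)

/-- `ξ ∈ ∂g(x)` for a (finite-valued) convex function `g`. -/
def ConvexSubgradAt {n : ℕ} (g : En n → ℝ) (ξ x : En n) : Prop :=
  ∀ y, g x + ⟪ξ, y - x⟫ ≤ g y

/-- `ξ ∈ ∂φ(x)` for an `m`-weakly convex `φ`: `ξ + m x` is a subgradient of the
convex function `φ + (m/2)‖·‖²` at `x`. -/
def WeakSubgradAt {n : ℕ} (φ : En n → EReal) (m : ℝ) (ξ x : En n) : Prop :=
  ∀ y, φ x + (((m / 2) * ‖x‖ ^ 2 + ⟪ξ + m • x, y - x⟫ : ℝ) : EReal) ≤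
    φ y + (((m / 2) * ‖y‖ ^ 2 : ℝ) : EReal)

set_option linter.unreachableTactic false
set_option linter.unusedTactic false
set_option maxHeartbeats 1000000

lemma my_le_of_forall_pos (a b : ℝ) (h : ∀ ε : ℝ, 0 < ε → a ≤ b + ε) : a ≤ b := by
  by_contra h'
  push_neg at h'
  have := h ((a - b) / 2) (by linarith)
  linarith

lemma aux_le_of_small (A B c : ℝ) (hc : 0 ≤ c)
    (h : ∀ t : ℝ, 0 < t → t ≤ 1 → A ≤ B + t * c) : A ≤ B := by
  apply my_le_of_forall_pos
  intro ε hε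
  have hc1 : (0:ℝ) < c + 1 := by linarith
  have ht0 : 0 < min 1 (ε / (c + 1)) := lt_min one_pos (by positivity)
  have ht1 : min 1 (ε / (c + 1)) ≤ 1 := min_le_left _ _
  have h2 := h _ ht0 ht1
  have h3 : min 1 (ε / (c + 1)) ≤ ε / (c + 1) := min_le_right _ _
  have h4 : min 1 (ε / (c + 1)) * c ≤ ε / (c + 1) * (c + 1) :=
    mul_le_mul h3 (by linarith) hc (by positivity)
  have h5 : ε / (c + 1) * (c + 1) = ε := by field_simp
  linarith

open scoped Pointwise in
lemma exists_subgrad {n : ℕ} (g : En n → ℝ) (hg : ConvexOn ℝ Set.univ g)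
    (x : En n) : ∃ ξ : En n, ConvexSubgradAt g ξ x := by
  classical
  set sl : En n → ℝ → ℝ := fun v t => (g (x + t • v) - g x) / t with hsl
  have hmono : ∀ (v : En n) (s t : ℝ), 0 < s → s ≤ t → sl v s ≤ sl v t := by
    intro v s t hs hst
    have ht : 0 < t := lt_of_lt_of_le hs hst
    have ht' : t ≠ 0 := ne_of_gt ht
    have hb0 : (0:ℝ) ≤ s / t := by positivity
    have ha0 : (0:ℝ) ≤ 1 - s / t := by
      have : s / t ≤ 1 := (div_le_one ht).mpr hst
      linarith
    have hvec : (1 - s / t) • x + (s / t) • (x + t • v) = x + s • v := by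
      match_scalars
      all_goals try field_simp
      all_goals try ring
    have hconv := hg.2 (Set.mem_univ x) (Set.mem_univ (x + t • v)) ha0 hb0
      (by ring : (1 - s / t) + s / t = 1)
    rw [hvec] at hconv
    simp only [smul_eq_mul] at hconv
    simp only [hsl]
    rw [div_le_div_iff₀ hs ht]
    have h2 : g (x + s • v) * t ≤ ((1 - s / t) * g x + s / t * g (x + t • v)) * t :=
      mul_le_mul_of_nonneg_right hconv ht.le
    have h3 : ((1 - s / t) * g x + s / t * g (x + t • v)) * t
        = (t - s) * g x + s * g (x + t • v) := by field_simp <;> ring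
    nlinarith [h2, h3]
  have hlb : ∀ (v : En n) (t : ℝ), 0 < t → g x - g (x - v) ≤ sl v t := by
    intro v t ht
    have ht1 : (0:ℝ) < t + 1 := by linarith
    have hvec : (t / (t + 1)) • (x - v) + (1 / (t + 1)) • (x + t • v) = x := by
      match_scalars
      all_goals try field_simp
      all_goals try ring
    have hab : t / (t + 1) + 1 / (t + 1) = 1 := by
      rw [← add_div, div_self (ne_of_gt ht1)]
    have hconv := hg.2 (Set.mem_univ (x - v)) (Set.mem_univ (x + t • v))
      (by positivity : (0:ℝ) ≤ t / (t + 1)) (by positivity : (0:ℝ) ≤ 1 / (t + 1)) hab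
    rw [hvec] at hconv
    simp only [smul_eq_mul] at hconv
    simp only [hsl]
    rw [le_div_iff₀ ht]
    have h2 : g x * (t + 1) ≤ (t / (t + 1) * g (x - v) + 1 / (t + 1) * g (x + t • v)) * (t + 1) :=
      mul_le_mul_of_nonneg_right hconv ht1.le
    have h3 : (t / (t + 1) * g (x - v) + 1 / (t + 1) * g (x + t • v)) * (t + 1)
        = t * g (x - v) + g (x + t • v) := by field_simp <;> ring
    nlinarith [h2, h3]
  set S : En n → Set ℝ := fun v => sl v '' Set.Ioi (0:ℝ) with hS
  have hSne : ∀ v, (S v).Nonempty := fun v => ⟨sl v 1, 1, Set.mem_Ioi.mpr one_pos, rfl⟩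
  have hSbdd : ∀ v, BddBelow (S v) := by
    intro v
    refine ⟨g x - g (x - v), ?_⟩
    rintro r ⟨t, ht, rfl⟩
    exact hlb v t ht
  set N : En n → ℝ := fun v => sInf (S v) with hN
  have hNle : ∀ v (t : ℝ), 0 < t → N v ≤ sl v t := fun v t ht =>
    csInf_le (hSbdd v) ⟨t, ht, rfl⟩
  have N_hom : ∀ c : ℝ, 0 < c → ∀ v, N (c • v) = c * N v := by
    intro c hc v
    have hc0 : c ≠ 0 := ne_of_gt hc
    have hset : S (c • v) = c • S v := by
      ext r
      simp only [hS, Set.mem_image, Set.mem_smul_set, Set.mem_Ioi]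
      constructor
      · rintro ⟨t, ht, rfl⟩
        have ht0 : t ≠ 0 := ne_of_gt ht
        refine ⟨sl v (t * c), ⟨t * c, mul_pos ht hc, rfl⟩, ?_⟩
        simp only [hsl, smul_eq_mul, smul_smul]
        field_simp
      · rintro ⟨s, ⟨t, ht, rfl⟩, rfl⟩
        have ht0 : t ≠ 0 := ne_of_gt ht
        refine ⟨t / c, div_pos ht hc, ?_⟩
        simp only [hsl, smul_eq_mul, smul_smul, div_mul_cancel₀ _ hc0]
        field_simp
    simp only [hN]
    rw [hset, Real.sInf_smul_of_nonneg hc.le, smul_eq_mul]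
  have N_add : ∀ u v, N (u + v) ≤ N u + N v := by
    intro u v
    apply my_le_of_forall_pos
    intro ε hε
    obtain ⟨a, ⟨s₁, hs₁, rfl⟩, ha⟩ :=
      exists_lt_of_csInf_lt (hSne u) (lt_add_of_pos_right (N u) (half_pos hε))
    obtain ⟨b, ⟨s₂, hs₂, rfl⟩, hb⟩ :=
      exists_lt_of_csInf_lt (hSne v) (lt_add_of_pos_right (N v) (half_pos hε))
    set s := min s₁ s₂ with hsdef
    have hs : 0 < s := lt_min hs₁ hs₂
    have h1 : sl u s ≤ N u + ε / 2 := le_trans (hmono u s s₁ hs (min_le_left _ _)) ha.le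
    have h2 : sl v s ≤ N v + ε / 2 := le_trans (hmono v s s₂ hs (min_le_right _ _)) hb.le
    have hkey : sl (u + v) (s / 2) ≤ sl u s + sl v s := by
      have hvec : ((1:ℝ)/2) • (x + s • u) + ((1:ℝ)/2) • (x + s • v) = x + (s / 2) • (u + v) := by
        match_scalars
        all_goals try field_simp
        all_goals try ring
      have hconv := hg.2 (Set.mem_univ (x + s • u)) (Set.mem_univ (x + s • v))
        (by norm_num : (0:ℝ) ≤ (1:ℝ)/2) (by norm_num : (0:ℝ) ≤ (1:ℝ)/2)
        (by norm_num : (1:ℝ)/2 + (1:ℝ)/2 = 1)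
      rw [hvec] at hconv
      simp only [smul_eq_mul] at hconv
      simp only [hsl]
      rw [← add_div, div_le_div_iff₀ (by positivity) hs]
      nlinarith [mul_le_mul_of_nonneg_right hconv hs.le]
    calc N (u + v) ≤ sl (u + v) (s / 2) := hNle _ _ (half_pos hs)
      _ ≤ sl u s + sl v s := hkey
      _ ≤ (N u + ε / 2) + (N v + ε / 2) := add_le_add h1 h2
      _ = N u + N v + ε := by ring
  have hN0 : N 0 = 0 := by
    have hle : N 0 ≤ 0 := by
      have := hNle 0 1 one_pos
      simpa [hsl] using this
    have hge : 0 ≤ N 0 := by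
      apply le_csInf (hSne 0)
      rintro r ⟨t, ht, rfl⟩
      simp [hsl]
    linarith
  have hbot : ∀ p : ((⊥ : (En n) →ₗ.[ℝ] ℝ)).domain, (⊥ : (En n) →ₗ.[ℝ] ℝ) p ≤ N p := by
    intro p
    have hp : (p : En n) = 0 := (Submodule.mem_bot ℝ).mp p.2
    have hval : (⊥ : (En n) →ₗ.[ℝ] ℝ) p = 0 := rfl
    rw [hp, hN0, hval]
  obtain ⟨ℓ, -, hℓ⟩ := exists_extension_of_le_sublinear (⊥ : (En n) →ₗ.[ℝ] ℝ) N N_hom N_add hbot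
  refine ⟨(InnerProductSpace.toDual ℝ (En n)).symm (LinearMap.toContinuousLinearMap ℓ), ?_⟩
  intro y
  have h1 : ⟪(InnerProductSpace.toDual ℝ (En n)).symm (LinearMap.toContinuousLinearMap ℓ), y - x⟫
      = ℓ (y - x) := by
    rw [InnerProductSpace.toDual_symm_apply]
    rfl
  have h2 : ℓ (y - x) ≤ N (y - x) := hℓ _
  have h3 : N (y - x) ≤ sl (y - x) 1 := hNle _ 1 one_pos
  have h4 : sl (y - x) 1 = g y - g x := by simp [hsl]
  rw [h1]
  linarith

lemma prox_subgrad {n : ℕ} (g : En n → ℝ) (hg : ConvexOn ℝ Set.univ g)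
    (μ : ℝ) (hμ : 0 < μ) (Mg : En n → ℝ) (xg : En n → En n)
    (hgprox : IsMoreauR g μ Mg xg) (z : En n) :
    ConvexSubgradAt g (μ⁻¹ • (z - xg z)) (xg z) := by
  intro y
  obtain ⟨heq, hle, -⟩ := hgprox z
  set p := xg z with hp
  have h2μ : (0:ℝ) < 2 * μ := by linarith
  apply aux_le_of_small _ _ (‖y - p‖ ^ 2 / (2 * μ)) (by positivity)
  intro t ht0 ht1
  have hvec : (1 - t) • p + t • y = p + t • (y - p) := by module
  have hconv := hg.2 (Set.mem_univ p) (Set.mem_univ y)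
    (by linarith : (0:ℝ) ≤ 1 - t) ht0.le (by ring : (1 - t) + t = 1)
  rw [hvec] at hconv
  simp only [smul_eq_mul] at hconv
  have hle' := hle (p + t • (y - p))
  have hshift : p + t • (y - p) - z = (p - z) + t • (y - p) := by abel
  have hnorm : ‖p + t • (y - p) - z‖ ^ 2
      = ‖p - z‖ ^ 2 + 2 * (t * ⟪p - z, y - p⟫) + t ^ 2 * ‖y - p‖ ^ 2 := by
    rw [hshift, norm_add_sq_real, real_inner_smul_right, norm_smul, Real.norm_eq_abs,
      abs_of_pos ht0]
    ring
  have hip : ⟪μ⁻¹ • (z - p), y - p⟫ = μ⁻¹ * (-⟪p - z, y - p⟫) := by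
    rw [real_inner_smul_left, show z - p = -(p - z) by abel, inner_neg_left]
  rw [hip]
  -- clean arithmetic
  set I := ⟪p - z, y - p⟫ with hI
  set Q := ‖y - p‖ ^ 2 with hQ
  have H : g p + ‖p - z‖ ^ 2 / (2 * μ) ≤ (1 - t) * g p + t * g y
      + (‖p - z‖ ^ 2 + 2 * (t * I) + t ^ 2 * Q) / (2 * μ) := by
    rw [← hnorm, ← heq]
    calc Mg z ≤ g (p + t • (y - p)) + ‖p + t • (y - p) - z‖ ^ 2 / (2 * μ) := hle'
      _ ≤ (1 - t) * g p + t * g y + ‖p + t • (y - p) - z‖ ^ 2 / (2 * μ) := by linarith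
  have e1 : (‖p - z‖ ^ 2 + 2 * (t * I) + t ^ 2 * Q) / (2 * μ)
      = ‖p - z‖ ^ 2 / (2 * μ) + t * (μ⁻¹ * I) + t * (t * (Q / (2 * μ))) := by
    field_simp
  rw [e1] at H
  -- H : g p + A ≤ (1-t) g p + t g y + A + t (μ⁻¹ I) + t (t (Q/(2μ)))
  -- goal : g p + μ⁻¹ * (-I) ≤ g y + t * (Q / (2μ))
  nlinarith [H, ht0, ht1, mul_pos ht0 ht0]

/-- if `z̄` is a local minimizer of `F_μ` on the ball of radius
`r > 2μ M_{∂g}` and all subgradients of `g` are bounded by `M_{∂g}`, then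
`x_{μφ}(z̄)` minimizes `F` on the ball of radius `r - 2μ M_{∂g}`. -/
theorem stmt8 {n : ℕ} (φ : En n → EReal) (g : En n → ℝ) (mφ μ : ℝ)
    (hproper : ProperE φ) (hlsc : LowerSemicontinuous φ)
    (hmφ : 0 ≤ mφ) (hweak : WeaklyConvexOn φ mφ)
    (hg : ConvexOn ℝ Set.univ g)
    (hμ : 0 < μ) (hμm : μ * mφ < 1)
    (Fstar : ℝ)
    (hmin : ∃ xs : En n, φ xs - ((g xs : ℝ) : EReal) = (Fstar : EReal) ∧
      ∀ x, (Fstar : EReal) ≤ φ x - ((g x : ℝ) : EReal))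
    (Mφ : En n → ℝ) (xφ : En n → En n) (hφprox : IsMoreau φ μ Mφ xφ)
    (Mg : En n → ℝ) (xg : En n → En n) (hgprox : IsMoreauR g μ Mg xg)
    (Mdg : ℝ) (hMdg : 0 ≤ Mdg)
    (hbnd : ∀ x ξ : En n, ConvexSubgradAt g ξ x → ‖ξ‖ ≤ Mdg)
    (zbar : En n) (r : ℝ) (hr : 0 < r) (hr2 : 2 * μ * Mdg < r)
    (hloc : ∀ z : En n, ‖z - zbar‖ ≤ r → Mφ zbar - Mg zbar ≤ Mφ z - Mg z) :
    ∀ x : En n, ‖x - xφ zbar‖ ≤ r - 2 * μ * Mdg →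
      φ (xφ zbar) - ((g (xφ zbar) : ℝ) : EReal) ≤ φ x - ((g x : ℝ) : EReal) := by
  intro x hx
  classical
  have h2μ : (0:ℝ) < 2 * μ := by linarith
  set xb := xφ zbar with hxbdef
  set pb := xg zbar with hpbdef
  set η := μ⁻¹ • (zbar - pb) with hηdef
  have hηsub : ConvexSubgradAt g η pb := prox_subgrad g hg μ hμ Mg xg hgprox zbar
  have hηM : ‖η‖ ≤ Mdg := hbnd _ _ hηsub
  obtain ⟨hφeq, -, -⟩ := hφprox zbar
  set cb : ℝ := ‖xb - zbar‖ ^ 2 / (2 * μ) with hcbdef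
  have hφxb_ne_top : φ xb ≠ ⊤ := by
    intro h
    rw [h, EReal.top_add_coe] at hφeq
    exact (EReal.coe_ne_top _) hφeq
  have hφxb_ne_bot : φ xb ≠ ⊥ := hproper.2 xb
  set a : ℝ := (φ xb).toReal with hadef
  have ha : φ xb = (a : EReal) := (EReal.coe_toReal hφxb_ne_top hφxb_ne_bot).symm
  have haeq : Mφ zbar = a + cb := by
    rw [ha, ← EReal.coe_add] at hφeq
    exact_mod_cast hφeq
  -- linearization of Mg at zbar
  have hMglin : ∀ z : En n, Mg zbar + ⟪η, z - zbar⟫ ≤ Mg z := by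
    intro z
    obtain ⟨heqz, -, -⟩ := hgprox z
    obtain ⟨heqb, -, -⟩ := hgprox zbar
    have hsg := hηsub (xg z)
    set u := xg z - z with hu
    set ub := pb - zbar with hub
    have hed : ⟪η, z - zbar⟫ - ⟪η, xg z - pb⟫ = μ⁻¹ * (⟪ub, u⟫ - ‖ub‖ ^ 2) := by
      rw [← inner_sub_right]
      have h1 : z - zbar - (xg z - pb) = ub - u := by rw [hu, hub]; abel
      rw [h1, hηdef, real_inner_smul_left,
        show zbar - pb = -ub by rw [hub]; abel, inner_neg_left, inner_sub_right,
        real_inner_self_eq_norm_sq]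
      ring
    have h2 : (0:ℝ) ≤ ‖u - ub‖ ^ 2 := sq_nonneg _
    rw [norm_sub_sq_real] at h2
    have hquad : ‖ub‖ ^ 2 / (2 * μ) + μ⁻¹ * (⟪ub, u⟫ - ‖ub‖ ^ 2) ≤ ‖u‖ ^ 2 / (2 * μ) := by
      have h3 : ‖ub‖ ^ 2 / (2 * μ) + μ⁻¹ * (⟪ub, u⟫ - ‖ub‖ ^ 2)
          = (2 * ⟪ub, u⟫ - ‖ub‖ ^ 2) / (2 * μ) := by field_simp; ring
      rw [h3]
      have h4 : 2 * ⟪ub, u⟫ - ‖ub‖ ^ 2 ≤ ‖u‖ ^ 2 := by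
        have := real_inner_comm u ub
        linarith
      exact div_le_div_of_nonneg_right h4 h2μ.le
    rw [heqz, heqb]
    linarith [hsg, hed, hquad]
  -- the key geometric fact: xb = zbar - μ • η
  set d := xb + μ • η - zbar with hddef
  have hd0 : d = 0 := by
    by_contra hne
    have hdn : 0 < ‖d‖ := norm_pos_iff.mpr hne
    set t := min 1 (r / ‖d‖) with htdef
    have ht0 : 0 < t := lt_min one_pos (div_pos hr hdn)
    have ht1 : t ≤ 1 := min_le_left _ _
    have htr : t * ‖d‖ ≤ r := by
      have h5 : t ≤ r / ‖d‖ := min_le_right _ _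
      calc t * ‖d‖ ≤ (r / ‖d‖) * ‖d‖ := mul_le_mul_of_nonneg_right h5 (norm_nonneg d)
        _ = r := div_mul_cancel₀ r (ne_of_gt hdn)
    set z := zbar + t • d with hzdef
    have hzz : z - zbar = t • d := by rw [hzdef]; abel
    have hzr : ‖z - zbar‖ ≤ r := by
      rw [hzz, norm_smul, Real.norm_eq_abs, abs_of_pos ht0]
      exact htr
    have hlz := hloc z hzr
    obtain ⟨-, hφlez, -⟩ := hφprox z
    have hMφz : Mφ z ≤ a + ‖xb - z‖ ^ 2 / (2 * μ) := by
      have h6 := hφlez xb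
      rw [ha, ← EReal.coe_add] at h6
      exact_mod_cast h6
    have hMgz := hMglin z
    rw [hzz, real_inner_smul_right] at hMgz
    have hxz : xb - z = (xb - zbar) - t • d := by rw [hzdef]; abel
    have hexp : ‖xb - z‖ ^ 2 = ‖xb - zbar‖ ^ 2 - 2 * (t * ⟪xb - zbar, d⟫) + t ^ 2 * ‖d‖ ^ 2 := by
      rw [hxz, norm_sub_sq_real, real_inner_smul_right, norm_smul, Real.norm_eq_abs,
        abs_of_pos ht0]
      ring
    have hxbz : xb - zbar = d - μ • η := by rw [hddef]; abel
    have hip : ⟪xb - zbar, d⟫ = ‖d‖ ^ 2 - μ * ⟪η, d⟫ := by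
      rw [hxbz, inner_sub_left, real_inner_smul_left, real_inner_self_eq_norm_sq]
    have hquad2 : ‖xb - z‖ ^ 2 / (2 * μ)
        = cb + (t * ‖d‖ ^ 2 * (t - 2)) / (2 * μ) + t * ⟪η, d⟫ := by
      rw [hexp, hip, hcbdef]
      field_simp
      ring
    have hfinal : (0:ℝ) ≤ (t * ‖d‖ ^ 2 * (t - 2)) / (2 * μ) := by
      linarith [hlz, hMφz, hMgz, haeq, hquad2]
    rw [le_div_iff₀ h2μ] at hfinal
    nlinarith [hfinal, pow_pos hdn 2, ht0, ht1, mul_pos ht0 (pow_pos hdn 2)]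
  have hxzb : xb - zbar = -(μ • η) := by
    have h7 : xb + μ • η - zbar = 0 := by rw [← hddef, hd0]
    calc xb - zbar = (xb + μ • η - zbar) - μ • η := by abel
      _ = -(μ • η) := by rw [h7]; abel
  have hxbnorm : ‖xb - zbar‖ ≤ μ * Mdg := by
    rw [hxzb, norm_neg, norm_smul, Real.norm_eq_abs, abs_of_pos hμ]
    exact mul_le_mul_of_nonneg_left hηM hμ.le
  -- now the main chain
  by_cases hT : φ x = ⊤
  · rw [hT, EReal.top_sub_coe]
    exact le_top
  · have hB : φ x ≠ ⊥ := hproper.2 x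
    set b : ℝ := (φ x).toReal with hbdef
    have hbeq : φ x = (b : EReal) := (EReal.coe_toReal hT hB).symm
    obtain ⟨ξ, hξ⟩ := exists_subgrad g hg x
    have hξM : ‖ξ‖ ≤ Mdg := hbnd _ _ hξ
    set z := x + μ • ξ with hzdef
    have hzr : ‖z - zbar‖ ≤ r := by
      have hsplit : z - zbar = (x - xb) + (xb - zbar) + μ • ξ := by rw [hzdef]; abel
      have hμξ : ‖μ • ξ‖ ≤ μ * Mdg := by
        rw [norm_smul, Real.norm_eq_abs, abs_of_pos hμ]
        exact mul_le_mul_of_nonneg_left hξM hμ.le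
      calc ‖z - zbar‖ = ‖(x - xb) + (xb - zbar) + μ • ξ‖ := by rw [hsplit]
        _ ≤ ‖x - xb‖ + ‖xb - zbar‖ + ‖μ • ξ‖ := norm_add₃_le
        _ ≤ (r - 2 * μ * Mdg) + μ * Mdg + (μ * Mdg) := by
            exact add_le_add (add_le_add hx hxbnorm) hμξ
        _ = r := by ring
    have hlz := hloc z hzr
    obtain ⟨-, hφlez, -⟩ := hφprox z
    have hMφz : Mφ z ≤ b + ‖x - z‖ ^ 2 / (2 * μ) := by
      have h6 := hφlez x
      rw [hbeq, ← EReal.coe_add] at h6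
      exact_mod_cast h6
    obtain ⟨hgeqz, -, -⟩ := hgprox z
    have hMgz : g x + ‖x - z‖ ^ 2 / (2 * μ) ≤ Mg z := by
      rw [hgeqz]
      have hsg := hξ (xg z)
      set w := xg z with hwdef
      have hwz : w - z = (w - x) - μ • ξ := by rw [hzdef]; abel
      have hexp2 : ‖w - z‖ ^ 2 = ‖w - x‖ ^ 2 - 2 * (μ * ⟪w - x, ξ⟫) + μ ^ 2 * ‖ξ‖ ^ 2 := by
        rw [hwz, norm_sub_sq_real, real_inner_smul_right, norm_smul, Real.norm_eq_abs,
          abs_of_pos hμ]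
        ring
      have hxz2 : ‖x - z‖ ^ 2 = μ ^ 2 * ‖ξ‖ ^ 2 := by
        rw [show x - z = -(μ • ξ) by rw [hzdef]; abel, norm_neg, norm_smul, Real.norm_eq_abs,
          abs_of_pos hμ]
        ring
      have hcm : ⟪ξ, w - x⟫ = ⟪w - x, ξ⟫ := real_inner_comm _ _
      have hq : ‖x - z‖ ^ 2 / (2 * μ) - ‖w - z‖ ^ 2 / (2 * μ) ≤ ⟪ξ, w - x⟫ := by
        rw [hexp2, hxz2, hcm]
        have h8 : (μ ^ 2 * ‖ξ‖ ^ 2) / (2 * μ)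
            - (‖w - x‖ ^ 2 - 2 * (μ * ⟪w - x, ξ⟫) + μ ^ 2 * ‖ξ‖ ^ 2) / (2 * μ)
            = (2 * (μ * ⟪w - x, ξ⟫) - ‖w - x‖ ^ 2) / (2 * μ) := by ring
        rw [h8, div_le_iff₀ h2μ]
        nlinarith [sq_nonneg ‖w - x‖]
      linarith [hsg, hq]
    have hMgzb : Mg zbar ≤ g xb + cb := by
      obtain ⟨-, hgle, -⟩ := hgprox zbar
      exact hgle xb
    have hreal : a - g xb ≤ b - g x := by
      linarith [haeq, hlz, hMφz, hMgz, hMgzb]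
    rw [ha, hbeq, ← EReal.coe_sub, ← EReal.coe_sub]
    exact_mod_cast hreal
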